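/- arXiv:1308.1868 — 4 statements merged into one kernel-verified Lean document; each statement's English description precedes it below -/
import Mathlib

section
/- Let d ∈ ℝ, 0 < b < 1 and 0 < σ₁ < σ₂ be reals with σ₁²·b + σ₂²·(1−b) = 1. For t > 0 and A > 0 define I(t,A) = e^t · (2π)^{-1} · ∫ over the set of w ∈ ℝ with |w − √2·σ₁·√(bt)| > A and √(2t) − σ₁·√b·w ≥ log t of ( σ₂·√(1−b) / (√(2t) − σ₁·√b·w) ) · exp( −w²/2 − ( √(2t) − σ₁·√b·w − (log t)/(2√2·√t) − d/√t )² / (2·σ₂²·(1−b)) ) dw. Then for every ε > 0 there exists A₀ > 0 such that for all A ≥ A₀, limsup_{t→∞} I(t,A) ≤ ε. -/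
open MeasureTheory Filter Topology

/-- The Gaussian integral appearing in the estimate (R2) of Proposition 2.1. -/
noncomputable def R2Integral (σ₁ σ₂ b d t A : ℝ) : ℝ :=
  Real.exp t * (2 * Real.pi)⁻¹ *
    ∫ w in {w : ℝ | |w - Real.sqrt 2 * σ₁ * Real.sqrt (b * t)| > A ∧
        Real.sqrt (2 * t) - σ₁ * Real.sqrt b * w ≥ Real.log t},
      (σ₂ * Real.sqrt (1 - b) / (Real.sqrt (2 * t) - σ₁ * Real.sqrt b * w)) *
        Real.exp (-(w ^ 2) / 2 -
          (Real.sqrt (2 * t) - σ₁ * Real.sqrt b * w -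
              Real.log t / (2 * Real.sqrt 2 * Real.sqrt t) - d / Real.sqrt t) ^ 2 /
            (2 * σ₂ ^ 2 * (1 - b)))

set_option maxHeartbeats 1000000 in
private lemma quad_ident (β K s m w : ℝ) (hK : K ≠ 0) (hβ : β ^ 2 = 1 - K) :
    w ^ 2 / 2 + (s - β * w - m) ^ 2 / (2 * K) =
      (s - m) ^ 2 / 2 + (w - β * (s - m)) ^ 2 / (2 * K) := by
  have h2 : (2 * K) * (w ^ 2 / 2 + (s - β * w - m) ^ 2 / (2 * K)) =
      (2 * K) * ((s - m) ^ 2 / 2 + (w - β * (s - m)) ^ 2 / (2 * K)) := by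
    field_simp
    linear_combination (w ^ 2 - (s - m) ^ 2) * hβ
  exact mul_left_cancel₀ (by simpa using hK) h2

set_option maxHeartbeats 1600000 in
private lemma abstract_bound (K β δ c4 cσ : ℝ) (hK : 0 < K) (hβ : 0 < β)
    (hβ2 : β ^ 2 = 1 - K) (hδ : δ = K / (2 * β)) (hc4 : c4 = (4 * K)⁻¹) (hcσ : 0 ≤ cσ)
    (s m L A G : ℝ) (hs : 0 < s) (hL : 1 ≤ L) (hm : β * |m| ≤ 1) (hδs : 2 ≤ δ * s)
    (hA : 1 ≤ A) (hG : G = ∫ x : ℝ, Real.exp (-(c4 * x ^ 2))) :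
    (∫ w in {w : ℝ | |w - β * s| > A ∧ s - β * w ≥ L},
        cσ / (s - β * w) * Real.exp (-(w ^ 2) / 2 - (s - β * w - m) ^ 2 / (2 * K)))
      ≤ Real.exp (-((s - m) ^ 2 / 2)) * cσ *
          (2 / (K * s) * Real.exp (-((A - 1) ^ 2 * c4)) +
            1 / L * Real.exp (-(δ ^ 2 * s ^ 2 / (16 * K)))) * G := by
  have hL0 : (0:ℝ) < L := by linarith
  have hc4' : 0 < c4 := by rw [hc4]; positivity
  have hδ0 : 0 < δ := by rw [hδ]; positivity
  set S := {w : ℝ | |w - β * s| > A ∧ s - β * w ≥ L} with hS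
  set μ := β * (s - m) with hμ
  set c1 := 2 / (K * s) * Real.exp (-((A - 1) ^ 2 * c4)) with hc1
  set c2 := 1 / L * Real.exp (-(δ ^ 2 * s ^ 2 / (16 * K))) with hc2
  have hc1' : 0 ≤ c1 := by rw [hc1]; positivity
  have hc2' : 0 ≤ c2 := by rw [hc2]; positivity
  set Cb := Real.exp (-((s - m) ^ 2 / 2)) * cσ * (c1 + c2) with hCb
  have hCb' : 0 ≤ Cb := by rw [hCb]; positivity
  have hSm : MeasurableSet S := by
    rw [hS, Set.setOf_and]
    exact ((measurableSet_lt measurable_const ((measurable_id.sub_const (β * s)).abs))).inter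
      (measurableSet_le measurable_const (measurable_const.sub (measurable_id.const_mul β)))
  have key : ∀ w ∈ S, cσ / (s - β * w) * Real.exp (-(w ^ 2) / 2 - (s - β * w - m) ^ 2 / (2 * K))
      ≤ Cb * Real.exp (-(c4 * (w - μ) ^ 2)) := by
    rintro w ⟨hwA, hwD⟩
    have hD0 : 0 < s - β * w := hL0.trans_le hwD
    have hexp : cσ / (s - β * w) * Real.exp (-(w ^ 2) / 2 - (s - β * w - m) ^ 2 / (2 * K)) =
        cσ / (s - β * w) * (Real.exp (-((s - m) ^ 2 / 2)) *
          (Real.exp (-(c4 * (w - μ) ^ 2)) * Real.exp (-(c4 * (w - μ) ^ 2)))) := by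
      rw [← Real.exp_add, ← Real.exp_add]
      congr 1
      have h := quad_ident β K s m w hK.ne' hβ2
      have h3 : -(w ^ 2) / 2 - (s - β * w - m) ^ 2 / (2 * K) =
          -((s - m) ^ 2 / 2) - (w - μ) ^ 2 / (2 * K) := by
        rw [hμ]; linarith
      rw [h3, hc4]
      field_simp
      ring
    have hβm : |β * m| ≤ 1 := by rw [abs_mul, abs_of_pos hβ]; exact hm
    rcases le_or_gt (w - β * s) (δ * s) with h1 | h1
    · -- region 1
      have hzsq : (A - 1) ^ 2 ≤ (w - μ) ^ 2 := by
        have h2 : w - μ = (w - β * s) + β * m := by rw [hμ]; ring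
        have h1' : |w - β * s| - |β * m| ≤ |w - μ| := by
          rw [h2]
          have := abs_sub_abs_le_abs_sub (w - β * s) (-(β * m))
          simpa [sub_neg_eq_add] using this
        have h3 : A - 1 ≤ |w - μ| := by
          have hwA' : A < |w - β * s| := hwA
          linarith
        have h0 : 0 ≤ A - 1 := by linarith
        calc (A - 1) ^ 2 ≤ |w - μ| ^ 2 := by nlinarith [abs_nonneg (w - μ)]
          _ = (w - μ) ^ 2 := sq_abs _
      have hT : Real.exp (-(c4 * (w - μ) ^ 2)) ≤ Real.exp (-((A - 1) ^ 2 * c4)) := by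
        apply Real.exp_le_exp.mpr; nlinarith
      have hDlow : K * s / 2 ≤ s - β * w := by
        have hβδ : β * δ = K / 2 := by rw [hδ]; field_simp
        have h4 : β * (w - β * s) ≤ β * (δ * s) := mul_le_mul_of_nonneg_left h1 hβ.le
        nlinarith [hβ2]
      have hKs : 0 < K * s / 2 := by positivity
      calc cσ / (s - β * w) * Real.exp (-(w ^ 2) / 2 - (s - β * w - m) ^ 2 / (2 * K))
          = cσ / (s - β * w) * (Real.exp (-((s - m) ^ 2 / 2)) *
            (Real.exp (-(c4 * (w - μ) ^ 2)) * Real.exp (-(c4 * (w - μ) ^ 2)))) := hexp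
        _ ≤ cσ / (K * s / 2) * (Real.exp (-((s - m) ^ 2 / 2)) *
            (Real.exp (-((A - 1) ^ 2 * c4)) * Real.exp (-(c4 * (w - μ) ^ 2)))) := by
            gcongr
        _ = Real.exp (-((s - m) ^ 2 / 2)) * cσ * (c1 * Real.exp (-(c4 * (w - μ) ^ 2))) := by
            rw [hc1]; field_simp
        _ ≤ Real.exp (-((s - m) ^ 2 / 2)) * cσ * ((c1 + c2) * Real.exp (-(c4 * (w - μ) ^ 2))) := by
            gcongr <;> linarith
        _ = Cb * Real.exp (-(c4 * (w - μ) ^ 2)) := by rw [hCb]; ring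
    · -- region 2
      have hβm' : -1 ≤ β * m := by
        rcases abs_le.mp hβm with ⟨h, _⟩; linarith
      have hz2 : δ * s / 2 ≤ w - μ := by
        have h2 : w - μ = (w - β * s) + β * m := by rw [hμ]; ring
        rw [h2]; linarith
      have hT2 : Real.exp (-(c4 * (w - μ) ^ 2)) ≤ Real.exp (-(δ ^ 2 * s ^ 2 / (16 * K))) := by
        apply Real.exp_le_exp.mpr
        have h4 : (δ * s / 2) ^ 2 ≤ (w - μ) ^ 2 := by nlinarith
        have h5 : δ ^ 2 * s ^ 2 / (16 * K) = c4 * (δ * s / 2) ^ 2 := by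
          rw [hc4]; field_simp; ring
        have h6 : c4 * (δ * s / 2) ^ 2 ≤ c4 * (w - μ) ^ 2 :=
          mul_le_mul_of_nonneg_left h4 hc4'.le
        linarith
      calc cσ / (s - β * w) * Real.exp (-(w ^ 2) / 2 - (s - β * w - m) ^ 2 / (2 * K))
          = cσ / (s - β * w) * (Real.exp (-((s - m) ^ 2 / 2)) *
            (Real.exp (-(c4 * (w - μ) ^ 2)) * Real.exp (-(c4 * (w - μ) ^ 2)))) := hexp
        _ ≤ cσ / L * (Real.exp (-((s - m) ^ 2 / 2)) *
            (Real.exp (-(δ ^ 2 * s ^ 2 / (16 * K))) * Real.exp (-(c4 * (w - μ) ^ 2)))) := by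
            gcongr
        _ = Real.exp (-((s - m) ^ 2 / 2)) * cσ * (c2 * Real.exp (-(c4 * (w - μ) ^ 2))) := by
            rw [hc2]; field_simp
        _ ≤ Real.exp (-((s - m) ^ 2 / 2)) * cσ * ((c1 + c2) * Real.exp (-(c4 * (w - μ) ^ 2))) := by
            gcongr <;> linarith
        _ = Cb * Real.exp (-(c4 * (w - μ) ^ 2)) := by rw [hCb]; ring
  have hInt0 : Integrable (fun x : ℝ => Real.exp (-(c4 * x ^ 2))) := by
    simpa [neg_mul] using integrable_exp_neg_mul_sq hc4'
  have hIntb : Integrable (fun w : ℝ => Cb * Real.exp (-(c4 * (w - μ) ^ 2))) :=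
    (hInt0.comp_sub_right μ).const_mul Cb
  calc (∫ w in S, cσ / (s - β * w) * Real.exp (-(w ^ 2) / 2 - (s - β * w - m) ^ 2 / (2 * K)))
      = ∫ w, S.indicator
          (fun w => cσ / (s - β * w) * Real.exp (-(w ^ 2) / 2 - (s - β * w - m) ^ 2 / (2 * K))) w
        := (integral_indicator hSm).symm
    _ ≤ ∫ w, Cb * Real.exp (-(c4 * (w - μ) ^ 2)) := by
        apply integral_mono_of_nonneg _ hIntb
        · filter_upwards with w
          by_cases hw : w ∈ S
          · rw [Set.indicator_of_mem hw]; exact key w hw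
          · rw [Set.indicator_of_notMem hw]; positivity
        · filter_upwards with w
          apply Set.indicator_nonneg
          intro x hx
          have : 0 < s - β * x := hL0.trans_le hx.2
          positivity
    _ = Cb * G := by
        rw [integral_const_mul,
          show (∫ w : ℝ, Real.exp (-(c4 * (w - μ) ^ 2))) = ∫ x : ℝ, Real.exp (-(c4 * x ^ 2)) from
            integral_sub_right_eq_self (fun x => Real.exp (-(c4 * x ^ 2))) μ, hG]
    _ = Real.exp (-((s - m) ^ 2 / 2)) * cσ *
          (2 / (K * s) * Real.exp (-((A - 1) ^ 2 * c4)) +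
            1 / L * Real.exp (-(δ ^ 2 * s ^ 2 / (16 * K)))) * G := by
        rw [hCb]

set_option maxHeartbeats 1600000 in
/-- the estimate (R2) in the proof of Proposition 2.1: the recentered
Gaussian integral beyond a window of width `A` is small for `A` large, uniformly in large `t`. -/
theorem stmt_1 (σ₁ σ₂ b d : ℝ) (hb : 0 < b) (hb1 : b < 1) (hσ₁ : 0 < σ₁) (hσ : σ₁ < σ₂)
    (hnorm : σ₁ ^ 2 * b + σ₂ ^ 2 * (1 - b) = 1) :
    ∀ ε > (0:ℝ), ∃ A₀ > (0:ℝ), ∀ A ≥ A₀,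
      Filter.limsup (fun t : ℝ => R2Integral σ₁ σ₂ b d t A) atTop ≤ ε := by
  intro ε hε
  have hσ₂ : 0 < σ₂ := hσ₁.trans hσ
  have hb' : 0 < 1 - b := by linarith
  obtain ⟨K, hKdef⟩ : ∃ K : ℝ, K = σ₂ ^ 2 * (1 - b) := ⟨_, rfl⟩
  have hK : 0 < K := by rw [hKdef]; positivity
  have hsb : Real.sqrt b ^ 2 = b := Real.sq_sqrt hb.le
  have hsb0 : 0 < Real.sqrt b := Real.sqrt_pos.mpr hb
  obtain ⟨β, hβdef⟩ : ∃ β : ℝ, β = σ₁ * Real.sqrt b := ⟨_, rfl⟩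
  have hβ : 0 < β := by rw [hβdef]; positivity
  have hβ2 : β ^ 2 = 1 - K := by rw [hβdef, hKdef, mul_pow, hsb]; linarith
  obtain ⟨δ, hδdef⟩ : ∃ δ : ℝ, δ = K / (2 * β) := ⟨_, rfl⟩
  have hδ0 : 0 < δ := by rw [hδdef]; positivity
  obtain ⟨c4, hc4def⟩ : ∃ c4 : ℝ, c4 = (4 * K)⁻¹ := ⟨_, rfl⟩
  have hc4 : 0 < c4 := by rw [hc4def]; positivity
  obtain ⟨G, hGdef⟩ : ∃ G : ℝ, G = ∫ x : ℝ, Real.exp (-(c4 * x ^ 2)) := ⟨_, rfl⟩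
  have hG : 0 ≤ G := by rw [hGdef]; exact integral_nonneg fun x => (Real.exp_pos _).le
  obtain ⟨C, hCdef⟩ : ∃ C : ℝ,
      C = (2 * Real.pi)⁻¹ * Real.exp (Real.sqrt 2 * d) * (σ₂ * Real.sqrt (1 - b)) * G :=
    ⟨_, rfl⟩
  have hπ : (0:ℝ) < Real.pi := Real.pi_pos
  have hC : 0 ≤ C := by rw [hCdef]; positivity
  obtain ⟨c5, hc5def⟩ : ∃ c5 : ℝ, c5 = δ ^ 2 / (8 * K) := ⟨_, rfl⟩
  have hc5 : 0 < c5 := by rw [hc5def]; positivity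
  have hsqrt2 : (0:ℝ) < Real.sqrt 2 := Real.sqrt_pos.mpr (by norm_num)
  have h22 : Real.sqrt 2 * Real.sqrt 2 = 2 := Real.mul_self_sqrt (by norm_num)
  -- the key quantitative bound
  have key : ∀ A : ℝ, 1 ≤ A → ∀ t : ℝ, 1 ≤ t → 1 ≤ Real.log t →
      β * |Real.log t / (2 * Real.sqrt 2 * Real.sqrt t) + d / Real.sqrt t| ≤ 1 →
      2 ≤ δ * Real.sqrt (2 * t) →
      R2Integral σ₁ σ₂ b d t A ≤
        C * (Real.sqrt 2 / K) * Real.exp (-((A - 1) ^ 2 * c4)) +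
          C * (Real.sqrt t / Real.log t * Real.exp (-(c5 * t))) := by
    intro A hA t ht1 hlog hmb hδs
    have ht0 : (0:ℝ) < t := lt_of_lt_of_le one_pos ht1
    have hrt : 0 < Real.sqrt t := Real.sqrt_pos.mpr ht0
    have hs0 : 0 < Real.sqrt (2 * t) := Real.sqrt_pos.mpr (by linarith)
    have hs2 : Real.sqrt (2 * t) ^ 2 = 2 * t := Real.sq_sqrt (by linarith)
    have hst : Real.sqrt (2 * t) = Real.sqrt 2 * Real.sqrt t := Real.sqrt_mul (by norm_num) t
    have hL0 : (0:ℝ) < Real.log t := by linarith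
    have hcen : Real.sqrt 2 * σ₁ * Real.sqrt (b * t) = β * Real.sqrt (2 * t) := by
      rw [Real.sqrt_mul hb.le, hst, hβdef]; ring
    have hWset : {w : ℝ | |w - Real.sqrt 2 * σ₁ * Real.sqrt (b * t)| > A ∧
        Real.sqrt (2 * t) - σ₁ * Real.sqrt b * w ≥ Real.log t}
        = {w : ℝ | |w - β * Real.sqrt (2 * t)| > A ∧
            Real.sqrt (2 * t) - β * w ≥ Real.log t} := by
      ext w
      simp only [Set.mem_setOf_eq]
      rw [hcen, hβdef]
    have hfun : (fun w : ℝ =>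
        (σ₂ * Real.sqrt (1 - b) / (Real.sqrt (2 * t) - σ₁ * Real.sqrt b * w)) *
        Real.exp (-(w ^ 2) / 2 - (Real.sqrt (2 * t) - σ₁ * Real.sqrt b * w -
          Real.log t / (2 * Real.sqrt 2 * Real.sqrt t) - d / Real.sqrt t) ^ 2 /
          (2 * σ₂ ^ 2 * (1 - b))))
        = fun w : ℝ => σ₂ * Real.sqrt (1 - b) / (Real.sqrt (2 * t) - β * w) *
          Real.exp (-(w ^ 2) / 2 - (Real.sqrt (2 * t) - β * w -
            (Real.log t / (2 * Real.sqrt 2 * Real.sqrt t) + d / Real.sqrt t)) ^ 2 /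
            (2 * K)) := by
      funext w
      rw [hβdef, hKdef]
      have harg : -(w ^ 2) / 2 - (Real.sqrt (2 * t) - σ₁ * Real.sqrt b * w -
          Real.log t / (2 * Real.sqrt 2 * Real.sqrt t) - d / Real.sqrt t) ^ 2 /
          (2 * σ₂ ^ 2 * (1 - b))
          = -(w ^ 2) / 2 - (Real.sqrt (2 * t) - σ₁ * Real.sqrt b * w -
            (Real.log t / (2 * Real.sqrt 2 * Real.sqrt t) + d / Real.sqrt t)) ^ 2 /
            (2 * (σ₂ ^ 2 * (1 - b))) := by ring
      rw [harg]
    have habs := abstract_bound K β δ c4 (σ₂ * Real.sqrt (1 - b)) hK hβ hβ2 hδdef hc4def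
      (by positivity)
      (Real.sqrt (2 * t)) (Real.log t / (2 * Real.sqrt 2 * Real.sqrt t) + d / Real.sqrt t)
      (Real.log t) A G hs0 hlog hmb hδs hA hGdef
    rw [R2Integral, hWset, hfun]
    have step1 := mul_le_mul_of_nonneg_left habs
      (show (0:ℝ) ≤ Real.exp t * (2 * Real.pi)⁻¹ by positivity)
    refine le_trans step1 ?_
    -- pure algebra from here
    have hrtne : Real.sqrt t ≠ 0 := hrt.ne'
    have hs2ne : Real.sqrt 2 ≠ 0 := hsqrt2.ne'
    have hsm : Real.sqrt (2 * t) * (Real.log t / (2 * Real.sqrt 2 * Real.sqrt t) +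
        d / Real.sqrt t) = Real.log t / 2 + Real.sqrt 2 * d := by
      rw [hst]
      field_simp
    have hL2 : Real.exp (Real.log t / 2) = Real.sqrt t := by
      rw [Real.sqrt_eq_rpow, Real.rpow_def_of_pos ht0]
      congr 1
      ring
    have hEt : Real.exp t * Real.exp (-((Real.sqrt (2 * t) -
        (Real.log t / (2 * Real.sqrt 2 * Real.sqrt t) + d / Real.sqrt t)) ^ 2 / 2)) ≤
        Real.exp (Real.sqrt 2 * d) * Real.sqrt t := by
      rw [← Real.exp_add]
      set m := Real.log t / (2 * Real.sqrt 2 * Real.sqrt t) + d / Real.sqrt t with hmdef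
      have harg2 : t + -((Real.sqrt (2 * t) - m) ^ 2 / 2) =
          Real.sqrt 2 * d + Real.log t / 2 - m ^ 2 / 2 := by
        linear_combination (-(1:ℝ)/2) * hs2 + hsm
      rw [harg2, show Real.sqrt 2 * d + Real.log t / 2 - m ^ 2 / 2
            = (Real.sqrt 2 * d + Real.log t / 2) + -(m ^ 2 / 2) from by ring,
          Real.exp_add, Real.exp_add, hL2]
      have h7 : Real.exp (-(m ^ 2 / 2)) ≤ 1 := Real.exp_le_one_iff.mpr (neg_nonpos.mpr (by positivity))
      have h8 := mul_le_mul_of_nonneg_left h7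
        (show (0:ℝ) ≤ Real.exp (Real.sqrt 2 * d) * Real.sqrt t by positivity)
      simpa [mul_one] using h8
    have hB : δ ^ 2 * Real.sqrt (2 * t) ^ 2 / (16 * K) = c5 * t := by
      rw [hs2, hc5def]; ring
    rw [hB]
    have hX : 0 ≤ 2 / (K * Real.sqrt (2 * t)) * Real.exp (-((A - 1) ^ 2 * c4)) +
        1 / Real.log t * Real.exp (-(c5 * t)) :=
      add_nonneg (by positivity)
        (mul_nonneg (div_nonneg zero_le_one hL0.le) (Real.exp_pos _).le)
    have haux : Real.sqrt 2 / K = Real.sqrt t * (2 / (K * Real.sqrt (2 * t))) := by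
      rw [hst]
      field_simp
      linear_combination h22
    calc Real.exp t * (2 * Real.pi)⁻¹ *
          (Real.exp (-((Real.sqrt (2 * t) - (Real.log t / (2 * Real.sqrt 2 * Real.sqrt t) +
              d / Real.sqrt t)) ^ 2 / 2)) * (σ₂ * Real.sqrt (1 - b)) *
            (2 / (K * Real.sqrt (2 * t)) * Real.exp (-((A - 1) ^ 2 * c4)) +
              1 / Real.log t * Real.exp (-(c5 * t))) * G)
        = (2 * Real.pi)⁻¹ * (σ₂ * Real.sqrt (1 - b)) *
            (2 / (K * Real.sqrt (2 * t)) * Real.exp (-((A - 1) ^ 2 * c4)) +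
              1 / Real.log t * Real.exp (-(c5 * t))) * G *
            (Real.exp t * Real.exp (-((Real.sqrt (2 * t) -
              (Real.log t / (2 * Real.sqrt 2 * Real.sqrt t) + d / Real.sqrt t)) ^ 2 / 2))) := by
          ring
      _ ≤ (2 * Real.pi)⁻¹ * (σ₂ * Real.sqrt (1 - b)) *
            (2 / (K * Real.sqrt (2 * t)) * Real.exp (-((A - 1) ^ 2 * c4)) +
              1 / Real.log t * Real.exp (-(c5 * t))) * G *
            (Real.exp (Real.sqrt 2 * d) * Real.sqrt t) := by
          apply mul_le_mul_of_nonneg_left hEt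
          exact mul_nonneg (mul_nonneg (mul_nonneg (by positivity) (by positivity)) hX) hG
      _ = C * (Real.sqrt 2 / K) * Real.exp (-((A - 1) ^ 2 * c4)) +
            C * (Real.sqrt t / Real.log t * Real.exp (-(c5 * t))) := by
          rw [hCdef, haux]
          ring
  -- existence of A₀
  have hAt : Tendsto (fun A : ℝ => C * (Real.sqrt 2 / K) * Real.exp (-((A - 1) ^ 2 * c4)))
      atTop (𝓝 0) := by
    have h2 : Tendsto (fun A : ℝ => A - 1) atTop atTop := by
      simpa [sub_eq_add_neg] using tendsto_atTop_add_const_right atTop (-1) (tendsto_id (α := ℝ))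
    have h1 : Tendsto (fun A : ℝ => (A - 1) ^ 2 * c4) atTop atTop :=
      ((tendsto_pow_atTop two_ne_zero).comp h2).atTop_mul_const hc4
    have h3 : Tendsto (fun A : ℝ => Real.exp (-((A - 1) ^ 2 * c4))) atTop (𝓝 0) :=
      Real.tendsto_exp_atBot.comp (tendsto_neg_atTop_atBot.comp h1)
    simpa using h3.const_mul (C * (Real.sqrt 2 / K))
  obtain ⟨A₁, hA₁⟩ := eventually_atTop.mp (hAt.eventually_le_const (half_pos hε))
  refine ⟨max A₁ 1, lt_of_lt_of_le one_pos (le_max_right _ _), fun A hA => ?_⟩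
  have hA1 : 1 ≤ A := le_trans (le_max_right _ _) hA
  have hterm1 : C * (Real.sqrt 2 / K) * Real.exp (-((A - 1) ^ 2 * c4)) ≤ ε / 2 :=
    hA₁ A (le_trans (le_max_left _ _) hA)
  -- eventual facts in t
  have hsqrt_top : Tendsto Real.sqrt atTop atTop := by
    rw [show Real.sqrt = fun x : ℝ => x ^ (1/2 : ℝ) from funext fun x => Real.sqrt_eq_rpow x]
    exact tendsto_rpow_atTop (by norm_num)
  have ev1 : ∀ᶠ t : ℝ in atTop, 1 ≤ t := eventually_ge_atTop 1
  have ev2 : ∀ᶠ t : ℝ in atTop, 1 ≤ Real.log t := Real.tendsto_log_atTop.eventually_ge_atTop 1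
  have ev3 : ∀ᶠ t : ℝ in atTop,
      β * |Real.log t / (2 * Real.sqrt 2 * Real.sqrt t) + d / Real.sqrt t| ≤ 1 := by
    have ha : Tendsto (fun t : ℝ => Real.log t / Real.sqrt t) atTop (𝓝 0) := by
      have h := (isLittleO_log_rpow_atTop (by norm_num : (0:ℝ) < 1/2)).tendsto_div_nhds_zero
      exact h.congr fun x => by rw [Real.sqrt_eq_rpow]
    have hb2 : Tendsto (fun t : ℝ => (2 * Real.sqrt 2)⁻¹ * (Real.log t / Real.sqrt t))
        atTop (𝓝 0) := by simpa using ha.const_mul (2 * Real.sqrt 2)⁻¹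
    have hd : Tendsto (fun t : ℝ => d / Real.sqrt t) atTop (𝓝 0) :=
      tendsto_const_nhds.div_atTop hsqrt_top
    have hm0 : Tendsto (fun t : ℝ =>
        Real.log t / (2 * Real.sqrt 2 * Real.sqrt t) + d / Real.sqrt t) atTop (𝓝 0) := by
      have := hb2.add hd
      simp only [add_zero] at this
      exact this.congr fun t => by ring
    have := (hm0.abs).const_mul β
    simp only [abs_zero, mul_zero] at this
    exact this.eventually_le_const one_pos
  have ev4 : ∀ᶠ t : ℝ in atTop, 2 ≤ δ * Real.sqrt (2 * t) := by
    have h2t : Tendsto (fun t : ℝ => Real.sqrt (2 * t)) atTop atTop :=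
      hsqrt_top.comp (tendsto_id.const_mul_atTop two_pos)
    exact (h2t.const_mul_atTop hδ0).eventually_ge_atTop 2
  have ev5 : ∀ᶠ t : ℝ in atTop,
      C * (Real.sqrt t / Real.log t * Real.exp (-(c5 * t))) ≤ ε / 2 := by
    have hg : Tendsto (fun t : ℝ => t * Real.exp (-(c5 * t))) atTop (𝓝 0) := by
      have h := tendsto_rpow_mul_exp_neg_mul_atTop_nhds_zero 1 c5 hc5
      exact h.congr fun x => by rw [Real.rpow_one, neg_mul]
    have hsq : Tendsto (fun t : ℝ => Real.sqrt t / Real.log t * Real.exp (-(c5 * t)))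
        atTop (𝓝 0) := by
      apply tendsto_of_tendsto_of_tendsto_of_le_of_le' tendsto_const_nhds hg
      · filter_upwards [eventually_ge_atTop (1:ℝ),
          Real.tendsto_log_atTop.eventually_ge_atTop 1] with t h1 h2
        exact mul_nonneg (div_nonneg (Real.sqrt_nonneg t) (by linarith)) (Real.exp_pos _).le
      · filter_upwards [eventually_ge_atTop (1:ℝ),
          Real.tendsto_log_atTop.eventually_ge_atTop 1] with t h1 h2
        have hst2 : Real.sqrt t ≤ t := by
          have h3 : Real.sqrt t ≤ Real.sqrt (t * t) := Real.sqrt_le_sqrt (by nlinarith)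
          rwa [Real.sqrt_mul_self (by linarith)] at h3
        have h4 : Real.sqrt t / Real.log t ≤ Real.sqrt t :=
          div_le_self (Real.sqrt_nonneg t) h2
        exact mul_le_mul_of_nonneg_right (le_trans h4 hst2) (Real.exp_pos _).le
    have := hsq.const_mul C
    simp only [mul_zero] at this
    exact this.eventually_le_const (half_pos hε)
  have hev : ∀ᶠ t : ℝ in atTop, R2Integral σ₁ σ₂ b d t A ≤ ε := by
    filter_upwards [ev1, ev2, ev3, ev4, ev5] with t h1 h2 h3 h4 h5
    have hk := key A hA1 t h1 h2 h3 h4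
    linarith
  have hnn : ∀ᶠ t : ℝ in atTop, (0:ℝ) ≤ R2Integral σ₁ σ₂ b d t A := by
    filter_upwards [ev1, ev2] with t h1 h2
    rw [R2Integral]
    have hL0 : (0:ℝ) < Real.log t := by linarith
    apply mul_nonneg (by positivity)
    apply setIntegral_nonneg
    · rw [Set.setOf_and]
      exact (measurableSet_lt measurable_const
          ((measurable_id.sub_const (Real.sqrt 2 * σ₁ * Real.sqrt (b * t))).abs)).inter
        (measurableSet_le measurable_const
          (measurable_const.sub (measurable_id.const_mul (σ₁ * Real.sqrt b))))
    · intro w hw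
      have h3 : 0 < Real.sqrt (2 * t) - σ₁ * Real.sqrt b * w := lt_of_lt_of_le hL0 hw.2
      positivity
  exact limsup_le_of_le (isCoboundedUnder_le_of_eventually_le atTop hnn) hev
end

section
/- Fix r > 0, a > 0 and y₀ ∈ ℝ. Let f : [0,∞) → ℝ be measurable with 0 ≤ f(y) ≤ 1 for all y, and suppose f(y) ≤ e^r · exp( −(y + √2·r)²/(2r) ) · exp( y₀·(y + √2·r)/r ) for all y ≥ 0. Let x : (r,∞) → ℝ be a function with lim_{t→∞} x(t)/t = a. Then lim_{t→∞} ( √t / √(2π(t−r)) ) · e^{x(t)²/(2t)} · ∫_0^∞ f(y) · e^{√2·y} · exp( −(y − x(t))²/(2(t−r)) ) · ( 1 − exp( −2y·( x(t) + (3/(2√2))·log t )/(t−r) ) ) dy = (1/√(2π)) · e^{−a²·r/2} · ∫_0^∞ f(y) · e^{(√2+a)·y} · (1 − e^{−2·a·y}) dy. -/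
open MeasureTheory Filter

lemma aux_tendsto_div_sub (r : ℝ) : Tendsto (fun t : ℝ => t / (t - r)) atTop (nhds 1) := by
  have h : Tendsto (fun t : ℝ => r / t) atTop (nhds 0) :=
    tendsto_const_nhds.div_atTop tendsto_id
  have h2 : Tendsto (fun t : ℝ => 1 - r / t) atTop (nhds 1) := by
    simpa using tendsto_const_nhds.sub h
  have h3 : Tendsto (fun t : ℝ => (1 - r / t)⁻¹) atTop (nhds 1) := by
    simpa using h2.inv₀ one_ne_zero
  refine h3.congr' ?_
  filter_upwards [eventually_gt_atTop (max 0 r)] with t ht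
  have ht0 : t ≠ 0 := ne_of_gt (lt_of_le_of_lt (le_max_left 0 r) ht)
  have htr : t - r ≠ 0 := sub_ne_zero.mpr (ne_of_gt (lt_of_le_of_lt (le_max_right 0 r) ht))
  field_simp

lemma aux_sub_atTop (r : ℝ) : Tendsto (fun t : ℝ => t - r) atTop atTop := by
  simpa [sub_eq_add_neg] using tendsto_atTop_add_const_right atTop (-r) tendsto_id

lemma aux_log_div_sub (r : ℝ) : Tendsto (fun t : ℝ => Real.log t / (t - r)) atTop (nhds 0) := by
  have h0 : Tendsto (fun t : ℝ => Real.log t / t) atTop (nhds 0) :=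
    Real.isLittleO_log_id_atTop.tendsto_div_nhds_zero
  have h := h0.mul (aux_tendsto_div_sub r)
  rw [mul_one] at h
  refine h.congr' ?_
  filter_upwards [eventually_gt_atTop (max 0 r)] with t ht
  have ht0 : t ≠ 0 := ne_of_gt (lt_of_le_of_lt (le_max_left 0 r) ht)
  have htr : t - r ≠ 0 := sub_ne_zero.mpr (ne_of_gt (lt_of_le_of_lt (le_max_right 0 r) ht))
  field_simp

set_option maxHeartbeats 1000000 in
/-- the dominated-convergence computation of Lemma 3.2 of the paper. -/
theorem stmt_3 (r a y₀ : ℝ) (hr : 0 < r) (ha : 0 < a)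
    (f : ℝ → ℝ) (hf_meas : Measurable f)
    (hf0 : ∀ y, 0 ≤ y → 0 ≤ f y) (hf1 : ∀ y, 0 ≤ y → f y ≤ 1)
    (hf_dom : ∀ y, 0 ≤ y →
      f y ≤ Real.exp r * Real.exp (-(y + Real.sqrt 2 * r) ^ 2 / (2 * r)) *
        Real.exp (y₀ * (y + Real.sqrt 2 * r) / r))
    (x : ℝ → ℝ) (hx : Tendsto (fun t => x t / t) atTop (nhds a)) :
    Tendsto (fun t =>
        (Real.sqrt t / Real.sqrt (2 * Real.pi * (t - r))) * Real.exp (x t ^ 2 / (2 * t)) *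
          ∫ y in Set.Ioi (0:ℝ),
            f y * Real.exp (Real.sqrt 2 * y) * Real.exp (-(y - x t) ^ 2 / (2 * (t - r))) *
              (1 - Real.exp (-(2 * y * ((x t + (3 / (2 * Real.sqrt 2)) * Real.log t) / (t - r))))))
      atTop
      (nhds ((1 / Real.sqrt (2 * Real.pi)) * Real.exp (-a ^ 2 * r / 2) *
        ∫ y in Set.Ioi (0:ℝ),
          f y * Real.exp ((Real.sqrt 2 + a) * y) * (1 - Real.exp (-(2 * a * y))))) := by
  have s2 : (0:ℝ) < Real.sqrt 2 := Real.sqrt_pos.mpr (by norm_num)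
  have hs2 : Real.sqrt 2 ^ 2 = 2 := Real.sq_sqrt (by norm_num)
  have pi_pos := Real.pi_pos
  set c : ℝ := 3 / (2 * Real.sqrt 2) with hc_def
  have hc_pos : 0 < c := by positivity
  have hT := aux_tendsto_div_sub r
  -- x t / (t - r) → a
  have hxr : Tendsto (fun t => x t / (t - r)) atTop (nhds a) := by
    have h := hx.mul hT
    rw [mul_one] at h
    refine h.congr' ?_
    filter_upwards [eventually_gt_atTop (max 0 r)] with t ht
    have ht0 : t ≠ 0 := ne_of_gt (lt_of_le_of_lt (le_max_left 0 r) ht)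
    have htr : t - r ≠ 0 := sub_ne_zero.mpr (ne_of_gt (lt_of_le_of_lt (le_max_right 0 r) ht))
    field_simp
  -- prefactor limit
  have hpre : Tendsto (fun t => Real.sqrt t / Real.sqrt (2 * Real.pi * (t - r))) atTop
      (nhds (1 / Real.sqrt (2 * Real.pi))) := by
    have hinner : Tendsto (fun t : ℝ => t / (2 * Real.pi * (t - r))) atTop
        (nhds (1 / (2 * Real.pi))) := by
      have h := hT.const_mul (1 / (2 * Real.pi))
      rw [mul_one] at h
      refine h.congr' ?_
      filter_upwards [eventually_gt_atTop (max 0 r)] with t ht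
      have htr : t - r ≠ 0 := sub_ne_zero.mpr (ne_of_gt (lt_of_le_of_lt (le_max_right 0 r) ht))
      field_simp
    have h := (Real.continuous_sqrt.tendsto _).comp hinner
    have hv : Real.sqrt (1 / (2 * Real.pi)) = 1 / Real.sqrt (2 * Real.pi) := by
      rw [one_div, one_div, Real.sqrt_inv]
    rw [hv] at h
    refine h.congr' ?_
    filter_upwards [eventually_gt_atTop (max 0 r)] with t ht
    have ht0 : (0:ℝ) ≤ t := le_of_lt (lt_of_le_of_lt (le_max_left 0 r) ht)
    simp only [Function.comp_apply]
    rw [Real.sqrt_div ht0]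
  have h1lt : 1 / Real.sqrt (2 * Real.pi) < 1 := by
    rw [div_lt_one (Real.sqrt_pos.mpr (by positivity))]
    have : (1:ℝ) < 2 * Real.pi := by nlinarith [Real.pi_gt_three]
    nlinarith [Real.sq_sqrt (le_of_lt (show (0:ℝ) < 2 * Real.pi by positivity)),
      Real.sqrt_nonneg (2 * Real.pi)]
  -- rewrite the constants into the integrals
  simp only [← MeasureTheory.integral_const_mul]
  -- dominated convergence
  refine tendsto_integral_filter_of_dominated_convergence
    (fun y => Real.exp (Real.sqrt 2 * y₀ + (-(y ^ 2) / (2 * r) + (y₀ / r + 2 * a) * y)))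
    ?_ ?_ ?_ ?_
  · -- measurability
    refine Eventually.of_forall fun t => Measurable.aestronglyMeasurable ?_
    fun_prop
  · -- uniform bound
    filter_upwards [eventually_ge_atTop (r + 1),
      hxr.eventually_le_const (show a < 2 * a by linarith),
      hx.eventually_const_le (show (0:ℝ) < a from ha),
      hpre.eventually_le_const h1lt] with t ht h2a hx0 hpre1
    refine (ae_restrict_iff' measurableSet_Ioi).mpr (ae_of_all _ fun y hy => ?_)
    have hy0 : (0:ℝ) < y := hy
    have htr : (0:ℝ) < t - r := by linarith
    have ht0 : (0:ℝ) < t := by linarith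
    have ht1 : (1:ℝ) ≤ t := by linarith
    have hx0' : 0 ≤ x t := by
      have h := mul_nonneg hx0 ht0.le
      rwa [div_mul_cancel₀ _ (ne_of_gt ht0)] at h
    have hxb : x t ≤ 2 * a * (t - r) := by
      rw [div_le_iff₀ htr] at h2a; linarith
    have hlog0 : 0 ≤ Real.log t := Real.log_nonneg ht1
    set m : ℝ := 1 - Real.exp (-(2 * y * ((x t + c * Real.log t) / (t - r)))) with hm_def
    have hGle : -(2 * y * ((x t + c * Real.log t) / (t - r))) ≤ 0 := by
      have : 0 ≤ 2 * y * ((x t + c * Real.log t) / (t - r)) := by positivity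
      linarith
    have hm0 : 0 ≤ m := by
      have h1 : Real.exp (-(2 * y * ((x t + c * Real.log t) / (t - r)))) ≤ Real.exp 0 :=
        Real.exp_le_exp.mpr hGle
      rw [Real.exp_zero] at h1
      simp only [hm_def]; linarith
    have hm1 : m ≤ 1 := by
      have := Real.exp_pos (-(2 * y * ((x t + c * Real.log t) / (t - r))))
      simp only [hm_def]; linarith
    have hfy0 : 0 ≤ f y := hf0 y hy0.le
    have hpre0 : 0 ≤ Real.sqrt t / Real.sqrt (2 * Real.pi * (t - r)) := by positivity
    -- exponent bound
    have key1 : x t ^ 2 / (2 * t) + -(y - x t) ^ 2 / (2 * (t - r)) ≤ 2 * a * y := by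
      have expand : x t ^ 2 / (2 * t) + -(y - x t) ^ 2 / (2 * (t - r)) =
          (x t ^ 2 / (2 * t) - x t ^ 2 / (2 * (t - r))) + (x t * y) / (t - r)
            - y ^ 2 / (2 * (t - r)) := by
        field_simp
        ring
      have h1 : x t ^ 2 / (2 * t) ≤ x t ^ 2 / (2 * (t - r)) := by
        rw [div_le_div_iff₀ (by linarith) (by linarith)]
        nlinarith [sq_nonneg (x t)]
      have h2 : x t * y / (t - r) ≤ 2 * a * y := by
        rw [div_le_iff₀ htr]
        nlinarith [mul_le_mul_of_nonneg_right hxb hy0.le]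
      have h3 : 0 ≤ y ^ 2 / (2 * (t - r)) := by positivity
      rw [expand]; linarith
    -- bound on f
    have key2 : f y ≤ Real.exp (Real.sqrt 2 * y₀ +
        (-(y ^ 2) / (2 * r) + (y₀ / r - Real.sqrt 2) * y)) := by
      refine (hf_dom y hy0.le).trans (le_of_eq ?_)
      rw [← Real.exp_add, ← Real.exp_add]
      congr 1
      have hsq : (y + Real.sqrt 2 * r) ^ 2 = y ^ 2 + 2 * Real.sqrt 2 * r * y + 2 * r ^ 2 := by
        rw [add_sq, mul_pow, hs2]; ring
      rw [hsq]
      field_simp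
      ring
    have hF0 : 0 ≤ Real.sqrt t / Real.sqrt (2 * Real.pi * (t - r)) *
        Real.exp (x t ^ 2 / (2 * t)) *
        (f y * Real.exp (Real.sqrt 2 * y) * Real.exp (-(y - x t) ^ 2 / (2 * (t - r))) * m) := by
      have e1 : (0:ℝ) ≤ Real.exp (x t ^ 2 / (2 * t)) := (Real.exp_pos _).le
      have e2 : (0:ℝ) ≤ Real.exp (Real.sqrt 2 * y) := (Real.exp_pos _).le
      have e3 : (0:ℝ) ≤ Real.exp (-(y - x t) ^ 2 / (2 * (t - r))) := (Real.exp_pos _).le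
      have := mul_nonneg (mul_nonneg (mul_nonneg hfy0 e2) e3) hm0
      exact mul_nonneg (mul_nonneg hpre0 e1) this
    rw [Real.norm_eq_abs, abs_of_nonneg hF0]
    calc Real.sqrt t / Real.sqrt (2 * Real.pi * (t - r)) * Real.exp (x t ^ 2 / (2 * t)) *
          (f y * Real.exp (Real.sqrt 2 * y) * Real.exp (-(y - x t) ^ 2 / (2 * (t - r))) * m)
        = (Real.sqrt t / Real.sqrt (2 * Real.pi * (t - r)) * m) *
            Real.exp (x t ^ 2 / (2 * t) + -(y - x t) ^ 2 / (2 * (t - r))) *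
            (Real.exp (Real.sqrt 2 * y) * f y) := by
          rw [Real.exp_add]; ring
      _ ≤ 1 * Real.exp (2 * a * y) *
            (Real.exp (Real.sqrt 2 * y) * Real.exp (Real.sqrt 2 * y₀ +
              (-(y ^ 2) / (2 * r) + (y₀ / r - Real.sqrt 2) * y))) := by
          refine mul_le_mul ?_ ?_ ?_ ?_
          · refine mul_le_mul ?_ (Real.exp_le_exp.mpr key1) (Real.exp_pos _).le (by norm_num)
            exact mul_le_one₀ hpre1 hm0 hm1
          · exact mul_le_mul_of_nonneg_left key2 (Real.exp_pos _).le
          · exact mul_nonneg (Real.exp_pos _).le hfy0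
          · positivity
      _ = Real.exp (Real.sqrt 2 * y₀ + (-(y ^ 2) / (2 * r) + (y₀ / r + 2 * a) * y)) := by
          rw [one_mul, ← Real.exp_add, ← Real.exp_add]
          congr 1
          ring
  · -- integrability of the bound
    have hb : (0:ℝ) < (2 * r)⁻¹ := by positivity
    set K : ℝ := y₀ / r + 2 * a with hK_def
    have base : Integrable (fun y : ℝ => Real.exp (-(2 * r)⁻¹ * y ^ 2)) :=
      integrable_exp_neg_mul_sq hb
    have shifted : Integrable (fun y : ℝ => Real.exp (-(2 * r)⁻¹ * (y - K * r) ^ 2)) :=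
      base.comp_sub_right (K * r)
    have main : Integrable (fun y : ℝ =>
        Real.exp (Real.sqrt 2 * y₀ + (-(y ^ 2) / (2 * r) + K * y))) := by
      have h := shifted.const_mul (Real.exp (Real.sqrt 2 * y₀ + K ^ 2 * r / 2))
      refine h.congr (ae_of_all _ fun y => ?_)
      dsimp only
      rw [← Real.exp_add]
      congr 1
      field_simp
      ring
    exact main.restrict
  · -- pointwise limit
    refine ae_of_all _ fun y => ?_
    -- the exponent limit
    have hE : Tendsto (fun t => x t ^ 2 / (2 * t) + -(y - x t) ^ 2 / (2 * (t - r))) atTop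
        (nhds (-a ^ 2 * r / 2 + a * y)) := by
      have h1 : Tendsto (fun t => -((x t / t) ^ 2) * (r * (t / (t - r))) / 2) atTop
          (nhds (-(a ^ 2) * (r * 1) / 2)) :=
        ((hx.pow 2).neg.mul (hT.const_mul r)).div_const 2
      have h2 : Tendsto (fun t => x t / t * (t / (t - r)) * y) atTop (nhds (a * 1 * y)) :=
        (hx.mul hT).mul_const y
      have h3 : Tendsto (fun t : ℝ => -(y ^ 2) / (2 * (t - r))) atTop (nhds 0) := by
        have h2t : Tendsto (fun t : ℝ => 2 * (t - r)) atTop atTop :=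
          (aux_sub_atTop r).const_mul_atTop two_pos
        exact tendsto_const_nhds.div_atTop h2t
      have h := (h1.add h2).add h3
      have hv : -(a ^ 2) * (r * 1) / 2 + a * 1 * y + 0 = -a ^ 2 * r / 2 + a * y := by ring
      rw [hv] at h
      refine h.congr' ?_
      filter_upwards [eventually_gt_atTop (max 0 r)] with t ht
      have ht0 : t ≠ 0 := ne_of_gt (lt_of_le_of_lt (le_max_left 0 r) ht)
      have htr : t - r ≠ 0 := sub_ne_zero.mpr (ne_of_gt (lt_of_le_of_lt (le_max_right 0 r) ht))
      field_simp
      ring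
    have hG : Tendsto (fun t => -(2 * y * ((x t + c * Real.log t) / (t - r)))) atTop
        (nhds (-(2 * y * a))) := by
      have hinner : Tendsto (fun t => (x t + c * Real.log t) / (t - r)) atTop (nhds a) := by
        have h := hxr.add ((aux_log_div_sub r).const_mul c)
        rw [mul_zero, add_zero] at h
        exact h.congr fun t => by rw [add_div, mul_div_assoc]
      exact (hinner.const_mul (2 * y)).neg
    have hm : Tendsto (fun t => 1 - Real.exp (-(2 * y *
        ((x t + c * Real.log t) / (t - r))))) atTop
        (nhds (1 - Real.exp (-(2 * y * a)))) := by
      have hexp : Tendsto (fun t => Real.exp (-(2 * y * ((x t + c * Real.log t) / (t - r)))))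
          atTop (nhds (Real.exp (-(2 * y * a)))) := (Real.continuous_exp.tendsto _).comp hG
      exact tendsto_const_nhds.sub hexp
    have hN : Tendsto (fun t =>
        (Real.sqrt t / Real.sqrt (2 * Real.pi * (t - r)) *
          Real.exp (x t ^ 2 / (2 * t) + -(y - x t) ^ 2 / (2 * (t - r)))) *
        ((f y * Real.exp (Real.sqrt 2 * y)) *
          (1 - Real.exp (-(2 * y * ((x t + c * Real.log t) / (t - r))))))) atTop
        (nhds ((1 / Real.sqrt (2 * Real.pi) * Real.exp (-a ^ 2 * r / 2 + a * y)) *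
          ((f y * Real.exp (Real.sqrt 2 * y)) * (1 - Real.exp (-(2 * y * a)))))) := by
      have hexpE : Tendsto (fun t => Real.exp (x t ^ 2 / (2 * t) + -(y - x t) ^ 2 / (2 * (t - r))))
          atTop (nhds (Real.exp (-a ^ 2 * r / 2 + a * y))) := (Real.continuous_exp.tendsto _).comp hE
      exact (hpre.mul hexpE).mul (tendsto_const_nhds.mul hm)
    have hPL : (1 / Real.sqrt (2 * Real.pi) * Real.exp (-a ^ 2 * r / 2 + a * y)) *
          ((f y * Real.exp (Real.sqrt 2 * y)) * (1 - Real.exp (-(2 * y * a)))) =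
        1 / Real.sqrt (2 * Real.pi) * Real.exp (-a ^ 2 * r / 2) *
          (f y * Real.exp ((Real.sqrt 2 + a) * y) * (1 - Real.exp (-(2 * a * y)))) := by
      rw [Real.exp_add, show (Real.sqrt 2 + a) * y = Real.sqrt 2 * y + a * y from by ring,
        Real.exp_add, show -(2 * y * a) = -(2 * a * y) from by ring]
      ring
    rw [hPL] at hN
    exact hN.congr fun t => by rw [Real.exp_add]; ring
end

section
/- Let a > 0 and C ∈ ℝ, and for each t > 0 let g_t : [0,∞) → ℝ be measurable with 0 ≤ g_t(z) ≤ 1 for all z ≥ 0. If lim_{t→∞} ∫_0^∞ g_t(z) · e^{(√2+a)·z} · e^{−a²·t/2} · (1 − e^{−2·a·z}) dz = C, then also lim_{t→∞} ∫_0^∞ g_t(z) · e^{(√2+a)·z} · e^{−a²·t/2} dz = C. -/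
open MeasureTheory Filter

lemma aux_bound (a K s : ℝ) (ha : 0 < a) (hK : 0 < K) (hs : 0 < s) (hs1 : s ≤ 1)
    (hKe : Real.exp (-(2 * a * K)) ≤ 1 / 2)
    (h : ℝ → ℝ) (hm : Measurable h)
    (h0 : ∀ z, 0 ≤ z → 0 ≤ h z) (h1 : ∀ z, 0 ≤ z → h z ≤ 1) :
    0 ≤ (∫ z in Set.Ioi (0:ℝ), h z * Real.exp ((Real.sqrt 2 + a) * z) * s)
        - (∫ z in Set.Ioi (0:ℝ), h z * Real.exp ((Real.sqrt 2 + a) * z) * s *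
            (1 - Real.exp (-(2 * a * z)))) ∧
    (∫ z in Set.Ioi (0:ℝ), h z * Real.exp ((Real.sqrt 2 + a) * z) * s)
        - (∫ z in Set.Ioi (0:ℝ), h z * Real.exp ((Real.sqrt 2 + a) * z) * s *
            (1 - Real.exp (-(2 * a * z))))
      ≤ K * Real.exp ((Real.sqrt 2 + a) * K) * s
        + 2 * Real.exp (-(2 * a * K)) *
          ∫ z in Set.Ioi (0:ℝ), h z * Real.exp ((Real.sqrt 2 + a) * z) * s *
            (1 - Real.exp (-(2 * a * z))) := by
  set G : ℝ → ℝ := fun z => h z * Real.exp ((Real.sqrt 2 + a) * z) * s with hGdef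
  set F : ℝ → ℝ := fun z => h z * Real.exp ((Real.sqrt 2 + a) * z) * s *
      (1 - Real.exp (-(2 * a * z))) with hFdef
  set E : ℝ → ℝ := fun z => h z * Real.exp ((Real.sqrt 2 + a) * z) * s *
      Real.exp (-(2 * a * z)) with hEdef
  have hGm : Measurable G := by fun_prop
  have hFm : Measurable F := by fun_prop
  have hEm : Measurable E := by fun_prop
  have hG0 : ∀ z ∈ Set.Ioi (0:ℝ), 0 ≤ G z := fun z hz => by
    have := h0 z (le_of_lt hz)
    positivity
  have hexpz : ∀ z : ℝ, 0 ≤ z → 0 ≤ 1 - Real.exp (-(2 * a * z)) := by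
    intro z hz
    have : Real.exp (-(2 * a * z)) ≤ 1 := Real.exp_le_one_iff.mpr (by nlinarith)
    linarith
  have hF0 : ∀ z ∈ Set.Ioi (0:ℝ), 0 ≤ F z := fun z hz => by
    have h1 := hG0 z hz
    have h2 := hexpz z (le_of_lt hz)
    exact mul_nonneg h1 h2
  have hE0 : ∀ z ∈ Set.Ioi (0:ℝ), 0 ≤ E z := fun z hz => by
    have h1 := hG0 z hz
    exact mul_nonneg h1 (Real.exp_pos _).le
  have hGFE : ∀ z, G z = F z + E z := fun z => by simp [hGdef, hFdef, hEdef]; ring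
  have hFleG : ∀ z ∈ Set.Ioi (0:ℝ), F z ≤ G z := fun z hz => by
    rw [hGFE z]; exact le_add_of_nonneg_right (hE0 z hz)
  -- bound on E on Ioc 0 K
  have hEboundIoc : ∀ z ∈ Set.Ioc (0:ℝ) K, E z ≤ Real.exp ((Real.sqrt 2 + a) * K) * s := by
    intro z hz
    have hz0 : (0:ℝ) ≤ z := hz.1.le
    have hhz1 := h1 z hz0
    have hhz0 := h0 z hz0
    have he1 : Real.exp (-(2 * a * z)) ≤ 1 := Real.exp_le_one_iff.mpr (by nlinarith)
    have he2 : Real.exp ((Real.sqrt 2 + a) * z) ≤ Real.exp ((Real.sqrt 2 + a) * K) := by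
      apply Real.exp_le_exp.mpr
      have hs2 : (0:ℝ) ≤ Real.sqrt 2 := Real.sqrt_nonneg 2
      nlinarith [hz.2]
    have hep := (Real.exp_pos ((Real.sqrt 2 + a) * z)).le
    calc E z ≤ h z * Real.exp ((Real.sqrt 2 + a) * z) * s * 1 := by
          apply mul_le_mul_of_nonneg_left he1
          positivity
      _ = h z * Real.exp ((Real.sqrt 2 + a) * z) * s := by ring
      _ ≤ 1 * Real.exp ((Real.sqrt 2 + a) * K) * s := by
          apply mul_le_mul_of_nonneg_right _ hs.le
          calc h z * Real.exp ((Real.sqrt 2 + a) * z)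
              ≤ 1 * Real.exp ((Real.sqrt 2 + a) * z) :=
                mul_le_mul_of_nonneg_right hhz1 hep
            _ ≤ 1 * Real.exp ((Real.sqrt 2 + a) * K) := by simpa using he2
      _ = Real.exp ((Real.sqrt 2 + a) * K) * s := by ring
  -- bound E ≤ 2 e^{-2aK} F on Ioi K
  have hEboundIoi : ∀ z ∈ Set.Ioi K, E z ≤ 2 * Real.exp (-(2 * a * K)) * F z := by
    intro z hz
    have hzK : K ≤ z := (Set.mem_Ioi.mp hz).le
    have hz0 : (0:ℝ) ≤ z := le_trans hK.le hzK
    have hGz : 0 ≤ G z := hG0 z (lt_of_lt_of_le hK hzK)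
    have he1 : Real.exp (-(2 * a * z)) ≤ Real.exp (-(2 * a * K)) := by
      apply Real.exp_le_exp.mpr; nlinarith
    have he2 : 1 - Real.exp (-(2 * a * z)) ≥ 1 / 2 := by
      have := le_trans he1 hKe; linarith
    have hEz : E z ≤ G z * Real.exp (-(2 * a * K)) := mul_le_mul_of_nonneg_left he1 hGz
    have hFz : G z * (1 / 2) ≤ F z := mul_le_mul_of_nonneg_left he2 hGz
    calc E z ≤ G z * Real.exp (-(2 * a * K)) := hEz
      _ = 2 * Real.exp (-(2 * a * K)) * (G z * (1/2)) := by ring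
      _ ≤ 2 * Real.exp (-(2 * a * K)) * F z := by
          apply mul_le_mul_of_nonneg_left hFz
          positivity
  by_cases hFint : IntegrableOn F (Set.Ioi (0:ℝ)) volume
  · -- E integrable on Ioc 0 K
    have hIocIoi : Set.Ioc (0:ℝ) K ∪ Set.Ioi K = Set.Ioi (0:ℝ) := Set.Ioc_union_Ioi_eq_Ioi hK.le
    have hEint1 : IntegrableOn E (Set.Ioc (0:ℝ) K) volume := by
      apply Measure.integrableOn_of_bounded (M := Real.exp ((Real.sqrt 2 + a) * K) * s)
      · exact (measure_Ioc_lt_top).ne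
      · exact hEm.aestronglyMeasurable
      · filter_upwards [ae_restrict_mem measurableSet_Ioc] with z hz
        rw [Real.norm_eq_abs, abs_of_nonneg (hE0 z (Set.mem_Ioi.mpr hz.1))]
        exact hEboundIoc z hz
    have hFintK : IntegrableOn F (Set.Ioi K) volume :=
      hFint.mono_set (Set.Ioi_subset_Ioi hK.le)
    have hEint2 : IntegrableOn E (Set.Ioi K) volume := by
      apply Integrable.mono' (hFintK.const_mul (2 * Real.exp (-(2 * a * K))))
        hEm.aestronglyMeasurable
      filter_upwards [ae_restrict_mem measurableSet_Ioi] with z hz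
      rw [Real.norm_eq_abs, abs_of_nonneg (hE0 z (Set.mem_Ioi.mpr (lt_trans hK hz)))]
      exact hEboundIoi z hz
    have hEint : IntegrableOn E (Set.Ioi (0:ℝ)) volume := by
      rw [← hIocIoi]; exact hEint1.union hEint2
    have hGint : IntegrableOn G (Set.Ioi (0:ℝ)) volume := by
      have : G = fun z => F z + E z := funext hGFE
      rw [this]; exact hFint.add hEint
    have hsplit : (∫ z in Set.Ioi (0:ℝ), G z) = (∫ z in Set.Ioi (0:ℝ), F z)
        + ∫ z in Set.Ioi (0:ℝ), E z := by
      rw [show (∫ z in Set.Ioi (0:ℝ), G z) = ∫ z in Set.Ioi (0:ℝ), (F z + E z) from by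
        congr 1; exact funext hGFE]
      exact integral_add hFint hEint
    have hEnn : 0 ≤ ∫ z in Set.Ioi (0:ℝ), E z := setIntegral_nonneg measurableSet_Ioi hE0
    constructor
    · rw [hsplit]; linarith
    rw [hsplit]
    have hEsplit : (∫ z in Set.Ioi (0:ℝ), E z)
        = (∫ z in Set.Ioc (0:ℝ) K, E z) + ∫ z in Set.Ioi K, E z := by
      rw [← hIocIoi]
      exact setIntegral_union (Set.Ioc_disjoint_Ioi le_rfl) measurableSet_Ioi hEint1 hEint2
    have hb1 : (∫ z in Set.Ioc (0:ℝ) K, E z) ≤ K * Real.exp ((Real.sqrt 2 + a) * K) * s := by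
      calc (∫ z in Set.Ioc (0:ℝ) K, E z)
          ≤ ∫ _ in Set.Ioc (0:ℝ) K, Real.exp ((Real.sqrt 2 + a) * K) * s :=
            setIntegral_mono_on hEint1 (integrableOn_const measure_Ioc_lt_top.ne)
              measurableSet_Ioc hEboundIoc
        _ = K * Real.exp ((Real.sqrt 2 + a) * K) * s := by
            rw [setIntegral_const, Real.volume_real_Ioc_of_le hK.le, smul_eq_mul]
            ring
    have hb2 : (∫ z in Set.Ioi K, E z)
        ≤ 2 * Real.exp (-(2 * a * K)) * ∫ z in Set.Ioi (0:ℝ), F z := by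
      calc (∫ z in Set.Ioi K, E z)
          ≤ ∫ z in Set.Ioi K, 2 * Real.exp (-(2 * a * K)) * F z :=
            setIntegral_mono_on hEint2 (hFintK.const_mul _) measurableSet_Ioi hEboundIoi
        _ = 2 * Real.exp (-(2 * a * K)) * ∫ z in Set.Ioi K, F z := integral_const_mul _ _
        _ ≤ 2 * Real.exp (-(2 * a * K)) * ∫ z in Set.Ioi (0:ℝ), F z := by
            apply mul_le_mul_of_nonneg_left _ (by positivity)
            apply setIntegral_mono_set hFint
            · filter_upwards [ae_restrict_mem measurableSet_Ioi] with z hz using hF0 z hz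
            · exact HasSubset.Subset.eventuallyLE (Set.Ioi_subset_Ioi hK.le)
    linarith
  · -- G not integrable either
    have hGint : ¬ IntegrableOn G (Set.Ioi (0:ℝ)) volume := by
      intro hGint
      apply hFint
      apply Integrable.mono' hGint hFm.aestronglyMeasurable
      filter_upwards [ae_restrict_mem measurableSet_Ioi] with z hz
      rw [Real.norm_eq_abs, abs_of_nonneg (hF0 z hz)]
      exact hFleG z hz
    rw [integral_undef hFint, integral_undef hGint]
    constructor
    · simp
    · simp only [sub_zero, mul_zero, add_zero]
      positivity

/-- the identity (fz.10) in Proposition 6.2 of the paper: the factor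
`1 - e^{-2az}` may be dropped without changing the limit. -/
theorem stmt_5 (a C : ℝ) (ha : 0 < a) (g : ℝ → ℝ → ℝ)
    (hg_meas : ∀ t, 0 < t → Measurable (g t))
    (hg0 : ∀ t, 0 < t → ∀ z, 0 ≤ z → 0 ≤ g t z)
    (hg1 : ∀ t, 0 < t → ∀ z, 0 ≤ z → g t z ≤ 1)
    (hlim : Tendsto (fun t =>
        ∫ z in Set.Ioi (0:ℝ),
          g t z * Real.exp ((Real.sqrt 2 + a) * z) * Real.exp (-a ^ 2 * t / 2) *
            (1 - Real.exp (-(2 * a * z))))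
      atTop (nhds C)) :
    Tendsto (fun t =>
        ∫ z in Set.Ioi (0:ℝ),
          g t z * Real.exp ((Real.sqrt 2 + a) * z) * Real.exp (-a ^ 2 * t / 2))
      atTop (nhds C) := by

  set IF : ℝ → ℝ := fun t => ∫ z in Set.Ioi (0:ℝ),
      g t z * Real.exp ((Real.sqrt 2 + a) * z) * Real.exp (-a ^ 2 * t / 2) *
        (1 - Real.exp (-(2 * a * z))) with hIFdef
  set IG : ℝ → ℝ := fun t => ∫ z in Set.Ioi (0:ℝ),
      g t z * Real.exp ((Real.sqrt 2 + a) * z) * Real.exp (-a ^ 2 * t / 2) with hIGdef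
  have hstend : Tendsto (fun t : ℝ => Real.exp (-a ^ 2 * t / 2)) atTop (nhds 0) := by
    apply Real.tendsto_exp_atBot.comp
    apply Tendsto.atBot_div_const (by norm_num : (0:ℝ) < 2)
    exact (tendsto_const_mul_atBot_of_neg (by nlinarith : -a ^ 2 < 0)).mpr tendsto_id
  have hdiff : Tendsto (fun t => IG t - IF t) atTop (nhds 0) := by
    rw [Metric.tendsto_atTop]
    intro ε hε
    -- choose K
    set m : ℝ := min (1/2) (ε / (8 * (|C| + 1))) with hmdef
    have hm0 : 0 < m := by
      apply lt_min (by norm_num)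
      have : 0 < |C| + 1 := by positivity
      positivity
    have hm12 : m ≤ 1/2 := min_le_left _ _
    set K : ℝ := max 1 (-Real.log m / (2 * a)) with hKdef
    have hK1 : (1:ℝ) ≤ K := le_max_left _ _
    have hK0 : (0:ℝ) < K := lt_of_lt_of_le one_pos hK1
    have hKm : Real.exp (-(2 * a * K)) ≤ m := by
      rw [← Real.exp_log hm0]
      apply Real.exp_le_exp.mpr
      have h2a : 0 < 2 * a := by linarith
      have : -Real.log m / (2 * a) ≤ K := le_max_right _ _
      calc -(2 * a * K) ≤ -(2 * a * (-Real.log m / (2 * a))) := by nlinarith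
        _ = Real.log m := by field_simp
    have hKhalf : Real.exp (-(2 * a * K)) ≤ 1 / 2 := le_trans hKm hm12
    -- eventualities
    have hev1 : ∀ᶠ t in atTop, |IF t - C| < 1 := by
      have := Metric.tendsto_atTop.mp hlim 1 one_pos
      obtain ⟨N, hN⟩ := this
      filter_upwards [eventually_ge_atTop N] with t ht
      simpa [Real.dist_eq] using hN t ht
    have hev2 : ∀ᶠ t in atTop,
        K * Real.exp ((Real.sqrt 2 + a) * K) * Real.exp (-a ^ 2 * t / 2) < ε / 4 := by
      have : Tendsto (fun t : ℝ => K * Real.exp ((Real.sqrt 2 + a) * K) *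
          Real.exp (-a ^ 2 * t / 2)) atTop (nhds 0) := by
        simpa using hstend.const_mul (K * Real.exp ((Real.sqrt 2 + a) * K))
      have := this.eventually (eventually_lt_nhds (by positivity : (0:ℝ) < ε / 4))
      simpa using this
    rw [eventually_atTop] at hev1 hev2
    obtain ⟨N1, hN1⟩ := hev1
    obtain ⟨N2, hN2⟩ := hev2
    refine ⟨max 1 (max N1 N2), fun t ht => ?_⟩
    have ht1 : (1:ℝ) ≤ t := le_trans (le_max_left _ _) ht
    have ht0 : (0:ℝ) < t := lt_of_lt_of_le one_pos ht1
    have htN1 : N1 ≤ t := le_trans (le_trans (le_max_left _ _) (le_max_right _ _)) ht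
    have htN2 : N2 ≤ t := le_trans (le_trans (le_max_right _ _) (le_max_right _ _)) ht
    have hs0 : 0 < Real.exp (-a ^ 2 * t / 2) := Real.exp_pos _
    have hs1 : Real.exp (-a ^ 2 * t / 2) ≤ 1 := Real.exp_le_one_iff.mpr (by nlinarith)
    obtain ⟨hlo, hhi⟩ := aux_bound a K (Real.exp (-a ^ 2 * t / 2)) ha hK0 hs0 hs1 hKhalf
      (g t) (hg_meas t ht0) (hg0 t ht0) (hg1 t ht0)
    have hIFnn : 0 ≤ IF t := by
      apply setIntegral_nonneg measurableSet_Ioi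
      intro z hz
      have hz0 : (0:ℝ) ≤ z := (Set.mem_Ioi.mp hz).le
      have h1 : 0 ≤ g t z := hg0 t ht0 z hz0
      have h2 : Real.exp (-(2 * a * z)) ≤ 1 := Real.exp_le_one_iff.mpr (by nlinarith)
      have h3 : 0 ≤ 1 - Real.exp (-(2 * a * z)) := by linarith
      positivity
    have hIFle : IF t ≤ |C| + 1 := by
      have := hN1 t htN1
      have hC : C ≤ |C| := le_abs_self C
      have := abs_lt.mp this
      linarith [this.2]
    have hbound2 : 2 * Real.exp (-(2 * a * K)) * IF t ≤ ε / 4 := by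
      have hmle : m ≤ ε / (8 * (|C| + 1)) := min_le_right _ _
      have hCpos : (0:ℝ) < |C| + 1 := by positivity
      have h1 : 2 * Real.exp (-(2 * a * K)) * IF t ≤ 2 * m * (|C| + 1) := by
        have he0 : (0:ℝ) ≤ Real.exp (-(2 * a * K)) := (Real.exp_pos _).le
        nlinarith
      have h2 : 2 * m * (|C| + 1) ≤ ε / 4 := by
        have : 2 * m * (|C| + 1) ≤ 2 * (ε / (8 * (|C| + 1))) * (|C| + 1) := by nlinarith
        calc 2 * m * (|C| + 1) ≤ 2 * (ε / (8 * (|C| + 1))) * (|C| + 1) := this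
          _ = ε / 4 := by field_simp; ring
      linarith
    rw [Real.dist_eq, sub_zero, abs_of_nonneg hlo]
    have := hN2 t htN2
    linarith
  have : Tendsto (fun t => (IG t - IF t) + IF t) atTop (nhds (0 + C)) := hdiff.add hlim
  simpa using this
end

section
/- Let 0 < σ₁ < 1 and A > 0. Then lim_{s→∞} e^{s − 2s(1+σ₁²)} · (2π)^{−1/2} · ∫_{√(2s)·σ₁ − A/σ₁}^{√(2s)·σ₁ + A/σ₁} exp( 2·√(2s)·σ₁·x − x²/2 ) dx = 0. -/
open MeasureTheory Filter

private lemma sqrt_tendsto_atTop : Tendsto Real.sqrt atTop atTop := by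
  apply tendsto_atTop_atTop.mpr
  intro b
  refine ⟨max 0 (b ^ 2), fun x hx => ?_⟩
  calc b ≤ |b| := le_abs_self b
    _ = Real.sqrt (b ^ 2) := (Real.sqrt_sq_eq_abs b).symm
    _ ≤ Real.sqrt x := Real.sqrt_le_sqrt (le_trans (le_max_right _ _) hx)

/-- the diagonal term (T1) in the second-moment computation for the
truncated McKean martingale (proof of Proposition 4.2 of the paper) tends to zero. -/
theorem stmt_8 (σ₁ : ℝ) (h0 : 0 < σ₁) (h1 : σ₁ < 1) (A : ℝ) (hA : 0 < A) :
    Tendsto (fun s : ℝ =>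
        Real.exp (s - 2 * s * (1 + σ₁ ^ 2)) * (1 / Real.sqrt (2 * Real.pi)) *
          ∫ x in Set.Icc (Real.sqrt (2 * s) * σ₁ - A / σ₁) (Real.sqrt (2 * s) * σ₁ + A / σ₁),
            Real.exp (2 * Real.sqrt (2 * s) * σ₁ * x - x ^ 2 / 2))
      atTop (nhds 0) := by
  set a : ℝ := A / σ₁ with ha_def
  have ha : 0 < a := div_pos hA h0
  set g : ℝ → ℝ := fun s =>
    (1 / Real.sqrt (2 * Real.pi)) * (2 * a) *
      Real.exp (-(1 - σ₁ ^ 2) * s + 3 * (Real.sqrt (2 * s) * σ₁) * a - a ^ 2 / 2) with hg_def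
  have hgto : Tendsto g atTop (nhds 0) := by
    have hexp : Tendsto (fun s : ℝ =>
        -(1 - σ₁ ^ 2) * s + 3 * (Real.sqrt (2 * s) * σ₁) * a - a ^ 2 / 2) atTop atBot := by
      have h1' : Tendsto (fun s : ℝ =>
          Real.sqrt s * (-(1 - σ₁ ^ 2) * Real.sqrt s + 3 * Real.sqrt 2 * σ₁ * a)
            - a ^ 2 / 2) atTop atBot := by
        apply tendsto_atBot_add_const_right
        apply Filter.Tendsto.atTop_mul_atBot₀ sqrt_tendsto_atTop
        apply tendsto_atBot_add_const_right
        exact (tendsto_const_mul_atBot_of_neg (by nlinarith)).mpr sqrt_tendsto_atTop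
      refine h1'.congr' ?_
      filter_upwards [eventually_ge_atTop (0 : ℝ)] with s hs
      have h2s : Real.sqrt (2 * s) = Real.sqrt 2 * Real.sqrt s := Real.sqrt_mul (by norm_num) s
      have hss : Real.sqrt s * Real.sqrt s = s := Real.mul_self_sqrt hs
      rw [h2s]
      ring_nf
      nlinarith [hss]
    have hlim := (Real.tendsto_exp_atBot.comp hexp).const_mul
      ((1 / Real.sqrt (2 * Real.pi)) * (2 * a))
    rw [mul_zero] at hlim
    rw [hg_def]
    exact hlim.congr (fun s => by simp [Function.comp])
  have hbound : ∀ᶠ s : ℝ in atTop,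
      Real.exp (s - 2 * s * (1 + σ₁ ^ 2)) * (1 / Real.sqrt (2 * Real.pi)) *
        (∫ x in Set.Icc (Real.sqrt (2 * s) * σ₁ - a) (Real.sqrt (2 * s) * σ₁ + a),
          Real.exp (2 * Real.sqrt (2 * s) * σ₁ * x - x ^ 2 / 2)) ≤ g s := by
    filter_upwards [eventually_ge_atTop (0 : ℝ),
      eventually_ge_atTop (a ^ 2 / (2 * σ₁ ^ 2))] with s hs hs2
    set c : ℝ := Real.sqrt (2 * s) * σ₁ with hc_def
    have hcsq : Real.sqrt (2 * s) ^ 2 = 2 * s := Real.sq_sqrt (by linarith)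
    have hcnn : 0 ≤ Real.sqrt (2 * s) := Real.sqrt_nonneg _
    have hc2 : c ^ 2 = 2 * s * σ₁ ^ 2 := by rw [hc_def, mul_pow, hcsq]
    have hc0 : 0 ≤ c := mul_nonneg hcnn h0.le
    have hca : a ≤ c := by
      have h' : a / σ₁ ≤ Real.sqrt (2 * s) := by
        rw [show a / σ₁ = Real.sqrt ((a / σ₁) ^ 2) from
          (Real.sqrt_sq (by positivity)).symm]
        apply Real.sqrt_le_sqrt
        rw [div_pow, div_le_iff₀ (by positivity)]
        have hs2' : a ^ 2 ≤ s * (2 * σ₁ ^ 2) := (div_le_iff₀ (by positivity)).mp hs2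
        nlinarith [hs2']
      calc a = (a / σ₁) * σ₁ := by field_simp
        _ ≤ Real.sqrt (2 * s) * σ₁ := mul_le_mul_of_nonneg_right h' h0.le
        _ = c := hc_def.symm
    set B : ℝ := 2 * c * (c + a) - (c - a) ^ 2 / 2 with hB_def
    have hint : (∫ x in Set.Icc (c - a) (c + a),
        Real.exp (2 * Real.sqrt (2 * s) * σ₁ * x - x ^ 2 / 2)) ≤ (2 * a) * Real.exp B := by
      have hle : ∀ x ∈ Set.Icc (c - a) (c + a),
          Real.exp (2 * Real.sqrt (2 * s) * σ₁ * x - x ^ 2 / 2) ≤ Real.exp B := by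
        intro x hx
        apply Real.exp_le_exp.mpr
        have hx1 := hx.1
        have hx2 := hx.2
        have hx0 : 0 ≤ x := le_trans (by linarith) hx1
        have hrw : 2 * Real.sqrt (2 * s) * σ₁ * x - x ^ 2 / 2 = 2 * c * x - x ^ 2 / 2 := by
          rw [hc_def]; ring
        rw [hrw, hB_def]
        nlinarith [mul_nonneg hc0 (by linarith : (0:ℝ) ≤ c + a - x),
          mul_nonneg (by linarith : (0:ℝ) ≤ x - (c - a)) (by linarith : (0:ℝ) ≤ x + (c - a))]
      have hI : IntegrableOn (fun x => Real.exp (2 * Real.sqrt (2 * s) * σ₁ * x - x ^ 2 / 2))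
          (Set.Icc (c - a) (c + a)) := by
        apply Continuous.integrableOn_Icc
        continuity
      calc (∫ x in Set.Icc (c - a) (c + a),
            Real.exp (2 * Real.sqrt (2 * s) * σ₁ * x - x ^ 2 / 2))
          ≤ ∫ _x in Set.Icc (c - a) (c + a), Real.exp B := by
            apply setIntegral_mono_on hI (integrableOn_const (by
              rw [Real.volume_Icc]; exact ENNReal.ofReal_ne_top)) measurableSet_Icc hle
        _ = (2 * a) * Real.exp B := by
            rw [setIntegral_const, Real.volume_real_Icc_of_le (by linarith), smul_eq_mul]
            ring_nf
    have h1s : 0 ≤ Real.exp (s - 2 * s * (1 + σ₁ ^ 2)) * (1 / Real.sqrt (2 * Real.pi)) := by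
      positivity
    have hEB : Real.exp (s - 2 * s * (1 + σ₁ ^ 2)) * Real.exp B
        = Real.exp (-(1 - σ₁ ^ 2) * s + 3 * c * a - a ^ 2 / 2) := by
      rw [← Real.exp_add]
      congr 1
      rw [hB_def]
      linear_combination (3/2) * hc2
    calc Real.exp (s - 2 * s * (1 + σ₁ ^ 2)) * (1 / Real.sqrt (2 * Real.pi)) *
          (∫ x in Set.Icc (c - a) (c + a),
            Real.exp (2 * Real.sqrt (2 * s) * σ₁ * x - x ^ 2 / 2))
        ≤ Real.exp (s - 2 * s * (1 + σ₁ ^ 2)) * (1 / Real.sqrt (2 * Real.pi)) *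
          ((2 * a) * Real.exp B) := mul_le_mul_of_nonneg_left hint h1s
      _ = g s := by
          rw [hg_def]
          simp only
          rw [← hc_def, show Real.exp (s - 2 * s * (1 + σ₁ ^ 2)) * (1 / Real.sqrt (2 * Real.pi)) *
            (2 * a * Real.exp B) = (1 / Real.sqrt (2 * Real.pi)) * (2 * a) *
            (Real.exp (s - 2 * s * (1 + σ₁ ^ 2)) * Real.exp B) from by ring, hEB]
  have hlb : ∀ᶠ s : ℝ in atTop,
      (0:ℝ) ≤ Real.exp (s - 2 * s * (1 + σ₁ ^ 2)) * (1 / Real.sqrt (2 * Real.pi)) *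
        (∫ x in Set.Icc (Real.sqrt (2 * s) * σ₁ - a) (Real.sqrt (2 * s) * σ₁ + a),
          Real.exp (2 * Real.sqrt (2 * s) * σ₁ * x - x ^ 2 / 2)) := by
    filter_upwards with s
    have : 0 ≤ ∫ x in Set.Icc (Real.sqrt (2 * s) * σ₁ - a) (Real.sqrt (2 * s) * σ₁ + a),
        Real.exp (2 * Real.sqrt (2 * s) * σ₁ * x - x ^ 2 / 2) :=
      setIntegral_nonneg measurableSet_Icc (fun x _ => (Real.exp_pos _).le)
    positivity
  exact tendsto_of_tendsto_of_tendsto_of_le_of_le' tendsto_const_nhds hgto hlb hbound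
end
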